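/- For every natural number m and all real numbers x and z, one has (x+(m+1)z) · [t^m]((1+t)^x/(1+t(z+1))) − z · [t^m]((1+t)^x/(1+t(z+1))^2) = (x-m) · C(x,m). -/

import Mathlib

open Finset PowerSeries

/-- Generalized binomial coefficient `C(x, k) = x(x-1)⋯(x-k+1)/k!` for real `x`. -/
noncomputable def gchoose (x : ℝ) (k : ℕ) : ℝ :=
  (∏ i ∈ Finset.range k, (x - i)) / (Nat.factorial k)

/-- The binomial series `(1+t)^x = Σ C(x,k) t^k` as a formal power series. -/
noncomputable def binomSeries (x : ℝ) : PowerSeries ℝ :=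
  PowerSeries.mk fun k => gchoose x k

lemma gchoose_succ (x : ℝ) (k : ℕ) :
    (k + 1 : ℝ) * gchoose x (k + 1) = (x - k) * gchoose x k := by
  have h1 : (Nat.factorial k : ℝ) ≠ 0 := Nat.cast_ne_zero.2 (Nat.factorial_ne_zero k)
  have h2 : (Nat.factorial (k+1) : ℝ) ≠ 0 := Nat.cast_ne_zero.2 (Nat.factorial_ne_zero _)
  simp only [gchoose, Finset.prod_range_succ, Nat.factorial_succ, Nat.cast_mul,
    Nat.cast_add, Nat.cast_one]
  field_simp

lemma mk_mul_base (c : ℝ) :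
    (PowerSeries.mk fun k => (-c) ^ k) * (1 + PowerSeries.C c * PowerSeries.X) = 1 := by
  ext n
  rw [mul_add, mul_one]
  cases n with
  | zero => simp
  | succ n =>
    rw [map_add]
    have : (PowerSeries.C c * PowerSeries.X) = PowerSeries.C c * PowerSeries.X := rfl
    rw [show (PowerSeries.mk fun k => (-c) ^ k) * (PowerSeries.C c * PowerSeries.X)
        = ((PowerSeries.mk fun k => (-c) ^ k) * PowerSeries.C c) * PowerSeries.X by ring]
    rw [PowerSeries.coeff_succ_mul_X]
    simp [pow_succ, mul_comm]

lemma inv_base (c : ℝ) :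
    (1 + PowerSeries.C c * PowerSeries.X)⁻¹ = PowerSeries.mk fun k => (-c) ^ k := by
  rw [PowerSeries.inv_eq_iff_mul_eq_one (by simp)]
  exact mk_mul_base c

lemma inv_base_sq (c : ℝ) :
    ((1 + PowerSeries.C c * PowerSeries.X) ^ 2)⁻¹ =
      PowerSeries.mk fun k => (k + 1 : ℝ) * (-c) ^ k := by
  rw [PowerSeries.inv_eq_iff_mul_eq_one (by simp)]
  have : (PowerSeries.mk fun k => (k + 1 : ℝ) * (-c) ^ k) =
      (PowerSeries.mk fun k => (-c) ^ k) * (PowerSeries.mk fun k => (-c) ^ k) := by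
    ext n
    rw [PowerSeries.coeff_mul, Finset.Nat.sum_antidiagonal_eq_sum_range_succ_mk]
    simp only [PowerSeries.coeff_mk]
    have : ∀ i ∈ Finset.range (n+1), (-c)^i * (-c)^(n-i) = (-c)^n := by
      intro i hi
      have hin := Finset.mem_range.mp hi
      rw [← pow_add]
      congr 1
      omega
    rw [Finset.sum_congr rfl this]
    simp [mul_comm]
  rw [this, sq]
  rw [show (PowerSeries.mk fun k => (-c) ^ k) * (PowerSeries.mk fun k => (-c) ^ k) *
      ((1 + PowerSeries.C c * PowerSeries.X) * (1 + PowerSeries.C c * PowerSeries.X)) =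
      ((PowerSeries.mk fun k => (-c) ^ k) * (1 + PowerSeries.C c * PowerSeries.X)) *
      ((PowerSeries.mk fun k => (-c) ^ k) * (1 + PowerSeries.C c * PowerSeries.X)) by ring]
  rw [mk_mul_base, mul_one]

theorem coeff_combination (m : ℕ) (x z : ℝ) :
    (x + (m + 1) * z) *
          PowerSeries.coeff m
            (binomSeries x * (1 + PowerSeries.C (z + 1) * PowerSeries.X)⁻¹) -
        z * PowerSeries.coeff m
          (binomSeries x * ((1 + PowerSeries.C (z + 1) * PowerSeries.X) ^ 2)⁻¹) =
      (x - m) * gchoose x m := by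
  set w : ℝ := -(z + 1) with hw
  rw [inv_base, inv_base_sq]
  rw [PowerSeries.coeff_mul, PowerSeries.coeff_mul,
    Finset.Nat.sum_antidiagonal_eq_sum_range_succ_mk,
    Finset.Nat.sum_antidiagonal_eq_sum_range_succ_mk]
  simp only [PowerSeries.coeff_mk, binomSeries]
  rw [Finset.mul_sum, Finset.mul_sum, ← Finset.sum_sub_distrib]
  have key : ∀ k ∈ Finset.range (m + 1),
      (x + (↑m + 1) * z) * (gchoose x k * (-(z+1)) ^ (m - k)) -
        z * (gchoose x k * ((↑(m - k) + 1) * (-(z+1)) ^ (m - k))) =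
      (↑(k+1):ℝ) * gchoose x (k+1) * (-(z+1)) ^ (m + 1 - (k+1)) -
        (k:ℝ) * gchoose x k * (-(z+1)) ^ (m + 1 - k) := by
    intro k hk
    have hkm : k ≤ m := by simpa using Nat.lt_succ_iff.mp (Finset.mem_range.mp hk)
    have h1 : m + 1 - (k + 1) = m - k := by omega
    have h2 : m + 1 - k = (m - k) + 1 := by omega
    have h3 : ((m - k : ℕ) : ℝ) = (m : ℝ) - k := by
      rw [Nat.cast_sub hkm]
    push_cast
    rw [h2, gchoose_succ, h3, pow_succ]
    ring
  rw [Finset.sum_congr rfl key, Finset.sum_range_sub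
    (fun k => (k:ℝ) * gchoose x k * (-(z+1)) ^ (m + 1 - k))]
  simp only [Nat.cast_zero, zero_mul, mul_zero, zero_mul, sub_zero]
  rw [Nat.sub_self, pow_zero, mul_one, Nat.cast_add, Nat.cast_one, gchoose_succ]
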